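/- There exists an absolute constant C > 0 with the following property. Let A = (a_{ijk}) be a 2×2×2 integer hypermatrix whose associated trilinear form f is irreducible as a polynomial in ℤ[x₁,x₂,y₁,y₂,z₁,z₂]. Then for all real numbers X₁,X₂,Y₁,Y₂,Z₁,Z₂ ≥ 1, the number of triples (x,y,z) ∈ ℤ²×ℤ²×ℤ² with |x_i| ≤ X_i, |y_i| ≤ Y_i, |z_i| ≤ Z_i, gcd(x₁,x₂) = gcd(y₁,y₂) = gcd(z₁,z₂) = 1, f(x,y,z) = 0 and Δ_xy(z) = 0 is at most C·(X₁X₂ + Y₁Y₂). -/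

import Mathlib

open MvPolynomial

/-- Bezout style division: if `p*a2 = q*a1` with `p,q` coprime, the common ratio is integral. -/
lemma par_div {p q a1 a2 : ℤ} (h : IsCoprime p q) (heq : p * a2 = q * a1) :
    ∃ t, a1 = p * t ∧ a2 = q * t := by
  obtain ⟨r, s, hrs⟩ := h
  exact ⟨r * a1 + s * a2, by linear_combination (-a1) * hrs + (-s) * heq,
    by linear_combination (-a2) * hrs + r * heq⟩

lemma aux_lin {p q a1 a2 : ℤ} (h : IsCoprime p q) (heq : p * a1 + q * a2 = 0) :
    ∃ t, a1 = q * t ∧ a2 = -(p * t) := by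
  obtain ⟨t, h1, h2⟩ := par_div (h.symm.neg_right) (by linear_combination heq : q * a2 = (-p) * a1)
  exact ⟨t, h1, by linear_combination h2⟩

lemma cross_zero {u1 u2 v1 v2 w1 w2 : ℤ} (h1 : u1 * w1 + u2 * w2 = 0)
    (h2 : v1 * w1 + v2 * w2 = 0) (hw : ¬(w1 = 0 ∧ w2 = 0)) :
    u1 * v2 = u2 * v1 := by
  have e1 : (u1 * v2 - u2 * v1) * w1 = 0 := by linear_combination v2 * h1 - u2 * h2
  have e2 : (u1 * v2 - u2 * v1) * w2 = 0 := by linear_combination u1 * h2 - v1 * h1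
  rcases mul_eq_zero.1 e1 with h | h
  · linarith
  rcases mul_eq_zero.1 e2 with h' | h'
  · linarith
  · exact absurd ⟨h, h'⟩ hw

lemma prim_parallel {u1 u2 v1 v2 : ℤ} (hu : Int.gcd u1 u2 = 1) (hv : Int.gcd v1 v2 = 1)
    (h : u1 * v2 = u2 * v1) : (v1 = u1 ∧ v2 = u2) ∨ (v1 = -u1 ∧ v2 = -u2) := by
  obtain ⟨t, h1, h2⟩ := par_div (Int.isCoprime_iff_gcd_eq_one.mpr hu) h
  have : Int.gcd (u1 * t) (u2 * t) = 1 := by rwa [h1, h2] at hv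
  rw [Int.gcd_mul_right, hu, one_mul] at this
  have ht : t = 1 ∨ t = -1 := by omega
  rcases ht with ht | ht <;> subst ht
  · left; constructor <;> [rw [h1, mul_one]; rw [h2, mul_one]]
  · right; constructor <;> [rw [h1]; rw [h2]] <;> ring

lemma make_prim {v1 v2 : ℤ} (h : ¬(v1 = 0 ∧ v2 = 0)) :
    ∃ g w1 w2 : ℤ, g ≠ 0 ∧ Int.gcd w1 w2 = 1 ∧ v1 = g * w1 ∧ v2 = g * w2 := by
  have hg : Int.gcd v1 v2 ≠ 0 := by
    simp only [ne_eq, Int.gcd_eq_zero_iff]; exact h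
  refine ⟨(Int.gcd v1 v2 : ℤ), v1 / Int.gcd v1 v2, v2 / Int.gcd v1 v2, ?_, ?_, ?_, ?_⟩
  · exact_mod_cast hg
  · exact Int.gcd_div_gcd_div_gcd (Nat.pos_of_ne_zero hg)
  · exact (Int.mul_ediv_cancel' (Int.gcd_dvd_left _ _)).symm
  · exact (Int.mul_ediv_cancel' (Int.gcd_dvd_right _ _)).symm

/-- rank one decomposition of a singular nonzero 2x2 integer matrix. -/
lemma rank1 {α β γ δ : ℤ} (hdet : α * δ = β * γ) (hne : ¬(α = 0 ∧ β = 0 ∧ γ = 0 ∧ δ = 0)) :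
    ∃ u1 u2 v1 v2 : ℤ, Int.gcd u1 u2 = 1 ∧ ¬(v1 = 0 ∧ v2 = 0) ∧
      α = u1 * v1 ∧ β = u1 * v2 ∧ γ = u2 * v1 ∧ δ = u2 * v2 := by
  by_cases hc : α = 0 ∧ γ = 0
  · -- first column zero, second column nonzero
    have hbd : ¬(β = 0 ∧ δ = 0) := by tauto
    obtain ⟨g, w1, w2, hg, hw, hb, hd⟩ := make_prim hbd
    exact ⟨w1, w2, 0, g, hw, by simp [hg], by simp [hc.1], by rw [hb, mul_comm],
      by simp [hc.2], by rw [hd, mul_comm]⟩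
  · obtain ⟨g, u1, u2, hg, hu, ha, hc2⟩ := make_prim hc
    have hud : u1 * δ = u2 * β := by
      have : g * (u1 * δ) = g * (u2 * β) := by linear_combination hdet - δ * ha + β * hc2
      exact mul_left_cancel₀ hg this
    obtain ⟨k, hb, hd⟩ := par_div (Int.isCoprime_iff_gcd_eq_one.mpr hu) hud
    refine ⟨u1, u2, g, k, hu, ?_, by linarith, by linarith, by linarith, by linarith⟩
    rintro ⟨h1, h2⟩
    exact hc ⟨by rw [ha, h1, zero_mul], by rw [hc2, h1, zero_mul]⟩

lemma perp_card {a b : ℤ} (hab : ¬(a = 0 ∧ b = 0)) :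
    ∃ u v : ℤ × ℤ, ∀ x : ℤ × ℤ, Int.gcd x.1 x.2 = 1 → a * x.1 + b * x.2 = 0 →
      x = u ∨ x = v := by
  by_cases hex : ∃ x : ℤ × ℤ, Int.gcd x.1 x.2 = 1 ∧ a * x.1 + b * x.2 = 0
  · obtain ⟨u, hu, hperp⟩ := hex
    refine ⟨u, -u, fun x hx hxp => ?_⟩
    have hcross : u.1 * x.2 = u.2 * x.1 :=
      cross_zero (by linear_combination hperp) (by linear_combination hxp) hab
    rcases prim_parallel hu hx hcross with ⟨h1, h2⟩ | ⟨h1, h2⟩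
    · left; exact Prod.ext h1 h2
    · right; exact Prod.ext h1 h2
  · exact ⟨0, 0, fun x hx hxp => absurd ⟨x, hx, hxp⟩ hex⟩

lemma nonunit_eval0 (g : MvPolynomial (Fin 6) ℤ) (h : eval (fun _ => (0:ℤ)) g = 0) :
    ¬ IsUnit g := fun hg => by
  have := hg.map (eval (fun _ => (0:ℤ)))
  rw [h] at this
  exact not_isUnit_zero this

lemma count_lemma {α β : Type*} [DecidableEq α] (T : Set α) (S : Finset β) (g : α → β)
    (hg : ∀ a ∈ T, g a ∈ S) (n : ℕ)
    (h : ∀ b : β, ∃ F : Finset α, (∀ a ∈ T, g a = b → a ∈ F) ∧ F.card ≤ n) :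
    T.ncard ≤ S.card * n := by
  choose F hF hcard using h
  have hsub : T ⊆ ↑(S.biUnion F) := fun a ha => by
    simp only [Finset.coe_biUnion, Set.mem_iUnion]
    exact ⟨g a, hg a ha, hF _ a ha rfl⟩
  calc T.ncard ≤ (S.biUnion F).card := by
        rw [← Set.ncard_coe_finset]; exact Set.ncard_le_ncard hsub (Finset.finite_toSet _)
    _ ≤ ∑ b ∈ S, (F b).card := Finset.card_biUnion_le
    _ ≤ S.card * n := by
        have := Finset.sum_le_card_nsmul S (fun b => (F b).card) n (fun b _ => hcard b)
        simpa using this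

lemma kernel_dichotomy {m11 m12 m21 m22 x1 x2 y1 y2 : ℤ}
    (hdet : m11 * m22 - m12 * m21 = 0)
    (heq : x1 * (m11 * y1 + m12 * y2) + x2 * (m21 * y1 + m22 * y2) = 0) :
    (m11 * x1 + m21 * x2 = 0 ∧ m12 * x1 + m22 * x2 = 0) ∨
    (m11 * y1 + m12 * y2 = 0 ∧ m21 * y1 + m22 * y2 = 0) := by
  by_cases hst : m11 * y1 + m12 * y2 = 0 ∧ m21 * y1 + m22 * y2 = 0
  · right; exact hst
  · left
    constructor
    · have h := cross_zero (u1 := x1) (u2 := x2) (v1 := m21) (v2 := -m11)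
        (w1 := m11*y1+m12*y2) (w2 := m21*y1+m22*y2) heq (by linear_combination (-y2) * hdet) hst
      linear_combination -h
    · have h := cross_zero (u1 := x1) (u2 := x2) (v1 := m22) (v2 := -m12)
        (w1 := m11*y1+m12*y2) (w2 := m21*y1+m22*y2) heq (by linear_combination y1 * hdet) hst
      linear_combination -h

lemma mem_box {a : ℤ} {A : ℝ} (h : (|a| : ℝ) ≤ A) : a ∈ Finset.Icc (-⌊A⌋) ⌊A⌋ := by
  rw [Finset.mem_Icc]
  have h1 : a ≤ ⌊A⌋ := Int.le_floor.mpr (le_trans (by exact_mod_cast le_abs_self a) h)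
  have h2 : -a ≤ ⌊A⌋ := Int.le_floor.mpr (le_trans (by exact_mod_cast neg_le_abs a) h)
  omega

lemma card_box {A : ℝ} (hA : 1 ≤ A) : ((Finset.Icc (-⌊A⌋) ⌊A⌋).card : ℝ) ≤ 3 * A := by
  have h1 : (1:ℤ) ≤ ⌊A⌋ := Int.le_floor.mpr (by exact_mod_cast hA)
  rw [Int.card_Icc]
  have he : (⌊A⌋ + 1 - -⌊A⌋).toNat = 2 * ⌊A⌋.toNat + 1 := by omega
  rw [he]
  have h2 : ((⌊A⌋.toNat : ℤ) : ℝ) ≤ A := by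
    rw [Int.toNat_of_nonneg (by omega)]; exact Int.floor_le A
  push_cast at h2 ⊢
  linarith
set_option maxHeartbeats 2000000 in
theorem stmt_13 : ∃ C : ℝ, 0 < C ∧
    ∀ (a111 a112 a121 a122 a211 a212 a221 a222 : ℤ)
      (f : MvPolynomial (Fin 6) ℤ),
      f = MvPolynomial.C a111 * X 0 * X 2 * X 4 + MvPolynomial.C a112 * X 0 * X 2 * X 5 +
          MvPolynomial.C a121 * X 0 * X 3 * X 4 + MvPolynomial.C a122 * X 0 * X 3 * X 5 +
          MvPolynomial.C a211 * X 1 * X 2 * X 4 + MvPolynomial.C a212 * X 1 * X 2 * X 5 +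
          MvPolynomial.C a221 * X 1 * X 3 * X 4 + MvPolynomial.C a222 * X 1 * X 3 * X 5 →
      Irreducible f →
      ∀ X₁ X₂ Y₁ Y₂ Z₁ Z₂ : ℝ, 1 ≤ X₁ → 1 ≤ X₂ → 1 ≤ Y₁ → 1 ≤ Y₂ → 1 ≤ Z₁ → 1 ≤ Z₂ →
      (Set.ncard {p : (ℤ × ℤ) × (ℤ × ℤ) × (ℤ × ℤ) |
          (|p.1.1| : ℝ) ≤ X₁ ∧ (|p.1.2| : ℝ) ≤ X₂ ∧
          (|p.2.1.1| : ℝ) ≤ Y₁ ∧ (|p.2.1.2| : ℝ) ≤ Y₂ ∧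
          (|p.2.2.1| : ℝ) ≤ Z₁ ∧ (|p.2.2.2| : ℝ) ≤ Z₂ ∧
          Int.gcd p.1.1 p.1.2 = 1 ∧ Int.gcd p.2.1.1 p.2.1.2 = 1 ∧
          Int.gcd p.2.2.1 p.2.2.2 = 1 ∧
          a111 * p.1.1 * p.2.1.1 * p.2.2.1 + a112 * p.1.1 * p.2.1.1 * p.2.2.2 +
            a121 * p.1.1 * p.2.1.2 * p.2.2.1 + a122 * p.1.1 * p.2.1.2 * p.2.2.2 +
            a211 * p.1.2 * p.2.1.1 * p.2.2.1 + a212 * p.1.2 * p.2.1.1 * p.2.2.2 +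
            a221 * p.1.2 * p.2.1.2 * p.2.2.1 + a222 * p.1.2 * p.2.1.2 * p.2.2.2 = 0 ∧
          (a111 * a221 - a121 * a211) * p.2.2.1 ^ 2 +
            (a111 * a222 + a112 * a221 - a212 * a121 - a211 * a122) * p.2.2.1 * p.2.2.2 +
            (a112 * a222 - a122 * a212) * p.2.2.2 ^ 2 = 0} : ℝ)
        ≤ C * (X₁ * X₂ + Y₁ * Y₂) := by
  refine ⟨72, by norm_num, ?_⟩
  intro a111 a112 a121 a122 a211 a212 a221 a222 f hf hirr X₁ X₂ Y₁ Y₂ Z₁ Z₂ hX₁ hX₂ hY₁ hY₂ _ _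
  -- consequence of irreducibility: no factorization with both factors vanishing at 0
  have hfac_contra : ∀ g h : MvPolynomial (Fin 6) ℤ, f = g * h →
      eval (fun _ => (0:ℤ)) g = 0 → eval (fun _ => (0:ℤ)) h = 0 → False := by
    intro g h hgh hg hh
    rcases hirr.isUnit_or_isUnit hgh with hu | hu
    · exact nonunit_eval0 g hg hu
    · exact nonunit_eval0 h hh hu
  -- the matrix M(z) is nonzero for every primitive z
  have hM : ∀ p q : ℤ, Int.gcd p q = 1 →
      ¬(p * a111 + q * a112 = 0 ∧ p * a121 + q * a122 = 0 ∧
        p * a211 + q * a212 = 0 ∧ p * a221 + q * a222 = 0) := by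
    rintro p q hpq ⟨h1, h2, h3, h4⟩
    have hcop : IsCoprime p q := Int.isCoprime_iff_gcd_eq_one.mpr hpq
    obtain ⟨t11, e1, e2⟩ := aux_lin hcop h1
    obtain ⟨t12, e3, e4⟩ := aux_lin hcop h2
    obtain ⟨t21, e5, e6⟩ := aux_lin hcop h3
    obtain ⟨t22, e7, e8⟩ := aux_lin hcop h4
    refine hfac_contra (MvPolynomial.C q * X 4 - MvPolynomial.C p * X 5)
      (MvPolynomial.C t11 * X 0 * X 2 + MvPolynomial.C t12 * X 0 * X 3 +
        MvPolynomial.C t21 * X 1 * X 2 + MvPolynomial.C t22 * X 1 * X 3) ?_ (by simp) (by simp)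
    rw [hf, e1, e2, e3, e4, e5, e6, e7, e8]
    simp only [map_mul, map_neg]
    ring
  set d1 := a111 * a221 - a121 * a211 with hd1def
  set d2 := a111 * a222 + a112 * a221 - a212 * a121 - a211 * a122 with hd2def
  set d3 := a112 * a222 - a122 * a212 with hd3def
  -- the discriminant form is not identically zero
  have hd : ¬(d1 = 0 ∧ d2 = 0 ∧ d3 = 0) := by
    rintro ⟨h1, h2, h3⟩
    rw [hd1def] at h1; rw [hd2def] at h2; rw [hd3def] at h3
    by_cases hM1 : a111 = 0 ∧ a121 = 0 ∧ a211 = 0 ∧ a221 = 0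
    · refine hfac_contra (MvPolynomial.C a112 * X 0 * X 2 + MvPolynomial.C a122 * X 0 * X 3 +
        MvPolynomial.C a212 * X 1 * X 2 + MvPolynomial.C a222 * X 1 * X 3) (X 5) ?_ (by simp) (by simp)
      rw [hf, hM1.1, hM1.2.1, hM1.2.2.1, hM1.2.2.2]; simp only [map_zero]; ring
    by_cases hM2 : a112 = 0 ∧ a122 = 0 ∧ a212 = 0 ∧ a222 = 0
    · refine hfac_contra (MvPolynomial.C a111 * X 0 * X 2 + MvPolynomial.C a121 * X 0 * X 3 +
        MvPolynomial.C a211 * X 1 * X 2 + MvPolynomial.C a221 * X 1 * X 3) (X 4) ?_ (by simp) (by simp)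
      rw [hf, hM2.1, hM2.2.1, hM2.2.2.1, hM2.2.2.2]; simp only [map_zero]; ring
    obtain ⟨u1, u2, v1, v2, hu, hv, e1, e2, e3, e4⟩ :=
      rank1 (α := a111) (β := a121) (γ := a211) (δ := a221) (by linarith) (by tauto)
    obtain ⟨w1, w2, s1, s2, hw, hs, f1, f2, f3, f4⟩ :=
      rank1 (α := a112) (β := a122) (γ := a212) (δ := a222) (by linarith) (by tauto)
    have key : (u1 * w2 - u2 * w1) * (v1 * s2 - v2 * s1) = 0 := by
      rw [e1, e2, e3, e4, f1, f2, f3, f4] at h2; linear_combination h2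
    rcases mul_eq_zero.1 key with hk | hk
    · rcases prim_parallel hu hw (by linarith) with ⟨g1, g2⟩ | ⟨g1, g2⟩
      · refine hfac_contra (MvPolynomial.C u1 * X 0 + MvPolynomial.C u2 * X 1)
          (MvPolynomial.C v1 * X 2 * X 4 + MvPolynomial.C v2 * X 3 * X 4 +
            MvPolynomial.C s1 * X 2 * X 5 + MvPolynomial.C s2 * X 3 * X 5) ?_ (by simp) (by simp)
        rw [hf, e1, e2, e3, e4, f1, f2, f3, f4, g1, g2]; simp only [map_mul]; ring
      · refine hfac_contra (MvPolynomial.C u1 * X 0 + MvPolynomial.C u2 * X 1)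
          (MvPolynomial.C v1 * X 2 * X 4 + MvPolynomial.C v2 * X 3 * X 4 -
            MvPolynomial.C s1 * X 2 * X 5 - MvPolynomial.C s2 * X 3 * X 5) ?_ (by simp) (by simp)
        rw [hf, e1, e2, e3, e4, f1, f2, f3, f4, g1, g2]; simp only [map_mul, map_neg]; ring
    · obtain ⟨g, t1, t2, hg, ht, k1, k2⟩ := make_prim hv
      have hpar : t1 * s2 = t2 * s1 := by
        have h5 : g * (t1 * s2) = g * (t2 * s1) := by
          rw [k1, k2] at hk; linear_combination hk
        exact mul_left_cancel₀ hg h5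
      obtain ⟨c, c1, c2⟩ := par_div (Int.isCoprime_iff_gcd_eq_one.mpr ht) hpar
      refine hfac_contra
        (MvPolynomial.C (g * u1) * X 0 * X 4 + MvPolynomial.C (g * u2) * X 1 * X 4 +
          MvPolynomial.C (c * w1) * X 0 * X 5 + MvPolynomial.C (c * w2) * X 1 * X 5)
        (MvPolynomial.C t1 * X 2 + MvPolynomial.C t2 * X 3) ?_ (by simp) (by simp)
      rw [hf, e1, e2, e3, e4, f1, f2, f3, f4, k1, k2, c1, c2]; simp only [map_mul]; ring
  -- a 4-element set containing all primitive roots of the discriminant form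
  obtain ⟨S, hScard, hSmem⟩ : ∃ S : Finset (ℤ × ℤ), S.card ≤ 4 ∧
      ∀ z : ℤ × ℤ, Int.gcd z.1 z.2 = 1 →
        d1 * z.1 ^ 2 + d2 * z.1 * z.2 + d3 * z.2 ^ 2 = 0 → z ∈ S := by
    by_cases hex : ∃ z : ℤ × ℤ, Int.gcd z.1 z.2 = 1 ∧
        d1 * z.1 ^ 2 + d2 * z.1 * z.2 + d3 * z.2 ^ 2 = 0
    · obtain ⟨⟨p, q⟩, hpq, hroot⟩ := hex
      simp only at hpq hroot
      have hcop : IsCoprime p q := Int.isCoprime_iff_gcd_eq_one.mpr hpq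
      obtain ⟨r, s, hrs⟩ := (hcop.pow (n := 2) (m := 2))
      have hiden : ∀ w1 w2 : ℤ, d1 * w1 ^ 2 + d2 * w1 * w2 + d3 * w2 ^ 2
          = (q * w1 - p * w2) * ((s * (d1 * q) - r * (d3 * q + d2 * p)) * w1 +
              (s * (d1 * p + d2 * q) - r * (d3 * p)) * w2) := by
        intro w1 w2
        linear_combination (-(d1 * w1 ^ 2 + d2 * w1 * w2 + d3 * w2 ^ 2)) * hrs +
          (s * w2 ^ 2 + r * w1 ^ 2) * hroot
      by_cases hef : s * (d1 * q) - r * (d3 * q + d2 * p) = 0 ∧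
          s * (d1 * p + d2 * q) - r * (d3 * p) = 0
      · exfalso
        apply hd
        have z10 := hiden 1 0
        have z01 := hiden 0 1
        have z11 := hiden 1 1
        rw [hef.1, hef.2] at z10 z01 z11
        exact ⟨by linear_combination z10, by linear_combination z11 - z10 - z01,
          by linear_combination z01⟩
      · obtain ⟨u, v, hperp⟩ := perp_card hef
        refine ⟨{(p, q), (-p, -q), u, v}, ?_, ?_⟩
        · refine le_trans (Finset.card_insert_le _ _) (Nat.succ_le_succ ?_)
          refine le_trans (Finset.card_insert_le _ _) (Nat.succ_le_succ ?_)
          refine le_trans (Finset.card_insert_le _ _) (Nat.succ_le_succ ?_)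
          exact Finset.card_singleton v ▸ le_refl 1
        · rintro ⟨z1, z2⟩ hz hzroot
          simp only at hz hzroot
          have hzf := hiden z1 z2
          rw [hzroot] at hzf
          rcases mul_eq_zero.1 hzf.symm with h0 | h0
          · rcases prim_parallel hpq hz (by linarith : p * z2 = q * z1) with ⟨m1, m2⟩ | ⟨m1, m2⟩
            · simp [m1, m2]
            · simp [m1, m2]
          · rcases hperp (z1, z2) hz (by linear_combination h0) with h | h
            · simp [h]
            · simp [h]
    · exact ⟨∅, by simp, fun z hz hroot => absurd ⟨z, hz, hroot⟩ hex⟩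
  -- boxes
  set BX : Finset (ℤ × ℤ) := Finset.Icc (-⌊X₁⌋) ⌊X₁⌋ ×ˢ Finset.Icc (-⌊X₂⌋) ⌊X₂⌋ with hBXdef
  set BY : Finset (ℤ × ℤ) := Finset.Icc (-⌊Y₁⌋) ⌊Y₁⌋ ×ˢ Finset.Icc (-⌊Y₂⌋) ⌊Y₂⌋ with hBYdef
  set T := {p : (ℤ × ℤ) × (ℤ × ℤ) × (ℤ × ℤ) |
      (|p.1.1| : ℝ) ≤ X₁ ∧ (|p.1.2| : ℝ) ≤ X₂ ∧
      (|p.2.1.1| : ℝ) ≤ Y₁ ∧ (|p.2.1.2| : ℝ) ≤ Y₂ ∧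
      (|p.2.2.1| : ℝ) ≤ Z₁ ∧ (|p.2.2.2| : ℝ) ≤ Z₂ ∧
      Int.gcd p.1.1 p.1.2 = 1 ∧ Int.gcd p.2.1.1 p.2.1.2 = 1 ∧
      Int.gcd p.2.2.1 p.2.2.2 = 1 ∧
      a111 * p.1.1 * p.2.1.1 * p.2.2.1 + a112 * p.1.1 * p.2.1.1 * p.2.2.2 +
        a121 * p.1.1 * p.2.1.2 * p.2.2.1 + a122 * p.1.1 * p.2.1.2 * p.2.2.2 +
        a211 * p.1.2 * p.2.1.1 * p.2.2.1 + a212 * p.1.2 * p.2.1.1 * p.2.2.2 +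
        a221 * p.1.2 * p.2.1.2 * p.2.2.1 + a222 * p.1.2 * p.2.1.2 * p.2.2.2 = 0 ∧
      d1 * p.2.2.1 ^ 2 + d2 * p.2.2.1 * p.2.2.2 + d3 * p.2.2.2 ^ 2 = 0} with hTdef
  have hcount : T.ncard ≤ S.card * (2 * BY.card + BX.card * 2) := by
    apply count_lemma T S (fun p => p.2.2)
    · intro a ha
      simp only [hTdef, Set.mem_setOf_eq] at ha
      obtain ⟨_, _, _, _, _, _, _, _, hgz, _, hQ⟩ := ha
      exact hSmem a.2.2 hgz (by linear_combination hQ)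
    · intro z
      by_cases hzT : ∃ a ∈ T, a.2.2 = z
      · obtain ⟨a0, ha0, ha0z⟩ := hzT
        simp only [hTdef, Set.mem_setOf_eq] at ha0
        obtain ⟨_, _, _, _, _, _, _, _, hgz, _, hQ0⟩ := ha0
        rw [ha0z] at hgz hQ0
        have hdet : (z.1 * a111 + z.2 * a112) * (z.1 * a221 + z.2 * a222) -
            (z.1 * a121 + z.2 * a122) * (z.1 * a211 + z.2 * a212) = 0 := by
          rw [hd1def, hd2def, hd3def] at hQ0
          linear_combination hQ0
        have hMz := hM z.1 z.2 hgz
        have hxk : ∃ ux vx : ℤ × ℤ, ∀ x : ℤ × ℤ, Int.gcd x.1 x.2 = 1 →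
            (z.1 * a111 + z.2 * a112) * x.1 + (z.1 * a211 + z.2 * a212) * x.2 = 0 →
            (z.1 * a121 + z.2 * a122) * x.1 + (z.1 * a221 + z.2 * a222) * x.2 = 0 →
            x = ux ∨ x = vx := by
          by_cases hc1 : z.1 * a111 + z.2 * a112 = 0 ∧ z.1 * a211 + z.2 * a212 = 0
          · have hc2 : ¬(z.1 * a121 + z.2 * a122 = 0 ∧ z.1 * a221 + z.2 * a222 = 0) := by
              tauto
            obtain ⟨u, v, hp⟩ := perp_card hc2
            exact ⟨u, v, fun x hx _ h2 => hp x hx h2⟩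
          · obtain ⟨u, v, hp⟩ := perp_card hc1
            exact ⟨u, v, fun x hx h1 _ => hp x hx h1⟩
        have hyk : ∃ uy vy : ℤ × ℤ, ∀ y : ℤ × ℤ, Int.gcd y.1 y.2 = 1 →
            (z.1 * a111 + z.2 * a112) * y.1 + (z.1 * a121 + z.2 * a122) * y.2 = 0 →
            (z.1 * a211 + z.2 * a212) * y.1 + (z.1 * a221 + z.2 * a222) * y.2 = 0 →
            y = uy ∨ y = vy := by
          by_cases hc1 : z.1 * a111 + z.2 * a112 = 0 ∧ z.1 * a121 + z.2 * a122 = 0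
          · have hc2 : ¬(z.1 * a211 + z.2 * a212 = 0 ∧ z.1 * a221 + z.2 * a222 = 0) := by
              tauto
            obtain ⟨u, v, hp⟩ := perp_card hc2
            exact ⟨u, v, fun y hy _ h2 => hp y hy h2⟩
          · obtain ⟨u, v, hp⟩ := perp_card hc1
            exact ⟨u, v, fun y hy h1 _ => hp y hy h1⟩
        obtain ⟨ux, vx, hxk⟩ := hxk
        obtain ⟨uy, vy, hyk⟩ := hyk
        refine ⟨(({ux, vx} : Finset (ℤ × ℤ)) ×ˢ (BY ×ˢ ({z} : Finset (ℤ × ℤ)))) ∪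
          (BX ×ˢ ((({uy, vy} : Finset (ℤ × ℤ))) ×ˢ ({z} : Finset (ℤ × ℤ)))), ?_, ?_⟩
        · intro a ha haz
          simp only [hTdef, Set.mem_setOf_eq] at ha
          obtain ⟨hax1, hax2, hay1, hay2, _, _, hgx, hgy, _, hfeq, _⟩ := ha
          rw [haz] at hfeq
          have heq : a.1.1 * ((z.1 * a111 + z.2 * a112) * a.2.1.1 +
                (z.1 * a121 + z.2 * a122) * a.2.1.2) +
              a.1.2 * ((z.1 * a211 + z.2 * a212) * a.2.1.1 +
                (z.1 * a221 + z.2 * a222) * a.2.1.2) = 0 := by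
            linear_combination hfeq
          rcases kernel_dichotomy hdet heq with ⟨hk1, hk2⟩ | ⟨hk1, hk2⟩
          · have hxin := hxk a.1 hgx hk1 hk2
            rw [Finset.mem_union]
            left
            rw [Finset.mem_product]
            refine ⟨by simpa using hxin, ?_⟩
            rw [Finset.mem_product]
            refine ⟨?_, Finset.mem_singleton.mpr haz⟩
            rw [hBYdef, Finset.mem_product]
            exact ⟨mem_box hay1, mem_box hay2⟩
          · have hyin := hyk a.2.1 hgy hk1 hk2
            rw [Finset.mem_union]
            right
            rw [Finset.mem_product]
            constructor
            · rw [hBXdef, Finset.mem_product]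
              exact ⟨mem_box hax1, mem_box hax2⟩
            · rw [Finset.mem_product]
              exact ⟨by simpa using hyin, Finset.mem_singleton.mpr haz⟩
        · refine le_trans (Finset.card_union_le _ _) ?_
          have c1 : (({ux, vx} : Finset (ℤ × ℤ)) ×ˢ (BY ×ˢ ({z} : Finset (ℤ × ℤ)))).card ≤
              2 * BY.card := by
            simp only [Finset.card_product, Finset.card_singleton, mul_one]
            have : ({ux, vx} : Finset (ℤ × ℤ)).card ≤ 2 :=
              le_trans (Finset.card_insert_le _ _) (by simp)
            exact Nat.mul_le_mul_right _ this
          have c2 : (BX ×ˢ ((({uy, vy} : Finset (ℤ × ℤ))) ×ˢ ({z} : Finset (ℤ × ℤ)))).card ≤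
              BX.card * 2 := by
            simp only [Finset.card_product, Finset.card_singleton, mul_one]
            have : ({uy, vy} : Finset (ℤ × ℤ)).card ≤ 2 :=
              le_trans (Finset.card_insert_le _ _) (by simp)
            exact Nat.mul_le_mul_left _ this
          omega
      · exact ⟨∅, fun a ha haz => absurd ⟨a, ha, haz⟩ hzT, by simp⟩
  -- numeric conclusion
  have hBXr : (BX.card : ℝ) ≤ 9 * (X₁ * X₂) := by
    rw [hBXdef, Finset.card_product]
    push_cast
    calc ((Finset.Icc (-⌊X₁⌋) ⌊X₁⌋).card : ℝ) * ((Finset.Icc (-⌊X₂⌋) ⌊X₂⌋).card : ℝ)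
        ≤ (3 * X₁) * (3 * X₂) :=
          mul_le_mul (card_box hX₁) (card_box hX₂) (Nat.cast_nonneg _) (by linarith)
      _ = 9 * (X₁ * X₂) := by ring
  have hBYr : (BY.card : ℝ) ≤ 9 * (Y₁ * Y₂) := by
    rw [hBYdef, Finset.card_product]
    push_cast
    calc ((Finset.Icc (-⌊Y₁⌋) ⌊Y₁⌋).card : ℝ) * ((Finset.Icc (-⌊Y₂⌋) ⌊Y₂⌋).card : ℝ)
        ≤ (3 * Y₁) * (3 * Y₂) :=
          mul_le_mul (card_box hY₁) (card_box hY₂) (Nat.cast_nonneg _) (by linarith)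
      _ = 9 * (Y₁ * Y₂) := by ring
  have hScr : (S.card : ℝ) ≤ 4 := by exact_mod_cast hScard
  have hnn : (0:ℝ) ≤ 2 * (BY.card : ℝ) + (BX.card : ℝ) * 2 := by
    have h1 : (0:ℝ) ≤ (BY.card : ℝ) := Nat.cast_nonneg _
    have h2 : (0:ℝ) ≤ (BX.card : ℝ) := Nat.cast_nonneg _
    linarith only [h1, h2]
  have h0 : (T.ncard : ℝ) ≤ (S.card : ℝ) * (2 * (BY.card : ℝ) + (BX.card : ℝ) * 2) := by
    calc (T.ncard : ℝ) ≤ ((S.card * (2 * BY.card + BX.card * 2) : ℕ) : ℝ) :=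
          Nat.cast_le.mpr hcount
      _ = (S.card : ℝ) * (2 * (BY.card : ℝ) + (BX.card : ℝ) * 2) := by push_cast; ring
  have hm : (S.card : ℝ) * (2 * (BY.card : ℝ) + (BX.card : ℝ) * 2) ≤
      4 * (2 * (BY.card : ℝ) + (BX.card : ℝ) * 2) := mul_le_mul_of_nonneg_right hScr hnn
  linarith only [h0, hm, hBXr, hBYr]
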